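/- Let Ω, ω_T : ℝ → ℝ³ be continuous and let Z, R : ℝ → ℝ^{3×3} be differentiable with Ż(t) = Z(t) ω_T(t)_× and Ṙ(t) = −ω_T(t)_× R(t) + R(t) Ω(t)_× for all t. Then R_z := Z R satisfies Ṙ_z(t) = R_z(t) Ω(t)_× for all t. -/

import Mathlib

open Matrix

/-- For `ω ∈ ℝ³`, the skew-symmetric matrix `ω_×` with `ω_× v = ω × v`. -/
def skew (ω : Fin 3 → ℝ) : Matrix (Fin 3) (Fin 3) ℝ :=
  !![0, -ω 2, ω 1; ω 2, 0, -ω 0; -ω 1, ω 0, 0]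

/-- The key invariance step of the observer design: if `Ż = Zω_{T×}` and
`Ṙ = −ω_{T×}R + RΩ_×`, then `R_z = ZR` satisfies `Ṙ_z = R_z Ω_×`.
Derivatives of matrix-valued functions are taken entrywise. -/
theorem stmt12
    (Ω ωT : ℝ → Fin 3 → ℝ) (hΩ : Continuous Ω) (hωT : Continuous ωT)
    (Z R : ℝ → Matrix (Fin 3) (Fin 3) ℝ)
    (hZ : ∀ t i j, HasDerivAt (fun u => Z u i j) ((Z t * skew (ωT t)) i j) t)
    (hR : ∀ t i j, HasDerivAt (fun u => R u i j)
      ((-(skew (ωT t)) * R t + R t * skew (Ω t)) i j) t) :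
    ∀ t i j, HasDerivAt (fun u => (Z u * R u) i j)
      ((Z t * R t * skew (Ω t)) i j) t := by
  intro t i j
  have h : HasDerivAt (fun u => ∑ k, Z u i k * R u k j)
      (∑ k, ((Z t * skew (ωT t)) i k * R t k j +
        Z t i k * ((-(skew (ωT t)) * R t + R t * skew (Ω t)) k j))) t :=
    HasDerivAt.fun_sum fun k _ => (hZ t i k).mul (hR t k j)
  have hM : Z t * skew (ωT t) * R t +
      Z t * (-(skew (ωT t)) * R t + R t * skew (Ω t)) =
      Z t * R t * skew (Ω t) := by noncomm_ring
  have hval : (Z t * R t * skew (Ω t)) i j =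
      ∑ k, ((Z t * skew (ωT t)) i k * R t k j +
        Z t i k * ((-(skew (ωT t)) * R t + R t * skew (Ω t)) k j)) := by
    rw [← hM]
    simp [Matrix.add_apply, Matrix.mul_apply, Finset.sum_add_distrib]
  have hfun : (fun u => (Z u * R u) i j) = fun u => ∑ k, Z u i k * R u k j := by
    funext u; rw [Matrix.mul_apply]
  rw [hfun, hval]
  exact h
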